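/- Let n ≥ 3 and let C be a class of n-vertex simple graphs that is closed under isomorphism, recognisable, and satisfies Kocay's lemma for a finite family 𝔉 = (𝓕_1, …, 𝓕_l) of finite sequences of simple graphs each with fewer than n vertices. Let M be the real matrix with rows indexed by the sequences in 𝔉 and columns indexed by the isomorphism classes of graphs in C, whose (𝓕, [H]) entry is the covering number c(𝓕, H). Then |C/∼| ≥ rank_ℝ(M), i.e., the number of equivalence classes of C under the reconstruction relation ∼ is at least the rank of M over ℝ. -/

import Mathlib

open SimpleGraph

/-- The vertex-deleted subgraph `G − v`: the induced subgraph of `G` obtained by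
deleting `v` and all edges incident with `v`. -/
abbrev vdel {n : ℕ} (G : SimpleGraph (Fin n)) (v : Fin n) :
    SimpleGraph ({v}ᶜ : Set (Fin n)) :=
  G.induce {v}ᶜ

/-- `H` is a reconstruction of `G`: there is a bijection `f` between the vertex
sets such that `G − v ≅ H − f v` for every vertex `v`. -/
def IsReconstruction {n : ℕ} (G H : SimpleGraph (Fin n)) : Prop :=
  ∃ f : Fin n ≃ Fin n, ∀ v : Fin n, Nonempty (vdel G v ≃g vdel H (f v))

/-- `s(F,G)`: the number of subgraphs of `G` isomorphic to `F`. -/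
noncomputable def subCount {k n : ℕ} (F : SimpleGraph (Fin k))
    (G : SimpleGraph (Fin n)) : ℕ :=
  Nat.card {H : G.Subgraph // Nonempty (F ≃g H.coe)}

/-- A finite sequence of simple graphs (on arbitrary finite vertex sets). -/
abbrev GSeq : Type := List (Σ k : ℕ, SimpleGraph (Fin k))

/-- `c(𝓕,G)`: the number of covers of `G` by the sequence `L`, i.e. of sequences
of subgraphs of `G`, the `i`-th being isomorphic to the `i`-th graph of `L`,
whose union (of both vertex sets and edge sets) is all of `G`. -/
noncomputable def coverCount {n : ℕ} (L : GSeq) (G : SimpleGraph (Fin n)) : ℕ :=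
  Nat.card {C : Fin L.length → G.Subgraph //
    (∀ i, Nonempty ((L.get i).2 ≃g (C i).coe)) ∧ (⨆ i, C i) = ⊤}

/-- `R` is a transversal of the isomorphism classes of graphs in `C`:
it contains exactly one representative of each isomorphism class in `C`. -/
def IsIsoTransversal {n : ℕ} (C : Set (SimpleGraph (Fin n)))
    (R : Finset (SimpleGraph (Fin n))) : Prop :=
  ↑R ⊆ C ∧ ∀ G ∈ C, ∃! H, H ∈ R ∧ Nonempty (G ≃g H)

/-- `D` is a transversal of the reconstruction classes of graphs in `C`:
it contains exactly one representative of each `∼`-equivalence class in `C`. -/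
def IsReconTransversal {n : ℕ} (C : Set (SimpleGraph (Fin n)))
    (D : Finset (SimpleGraph (Fin n))) : Prop :=
  ↑D ⊆ C ∧ ∀ G ∈ C, ∃! H, H ∈ D ∧ IsReconstruction G H

section Aux

variable {n : ℕ}

instance instFiniteSubgraph {V : Type*} [Finite V] (G : SimpleGraph V) :
    Finite G.Subgraph :=
  Finite.of_injective _ Subgraph.verts_spanningCoe_injective

lemma subCount_self_pos (G : SimpleGraph (Fin n)) : 0 < subCount G G := by
  have : Nonempty {H : G.Subgraph // Nonempty (G ≃g H.coe)} :=
    ⟨⟨⊤, ⟨(Subgraph.topIso).symm⟩⟩⟩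
  exact Nat.card_pos

lemma ncard_edgeSet_eq_of_iso {V W : Type*} {A : SimpleGraph V} {B : SimpleGraph W}
    (e : A ≃g B) : A.edgeSet.ncard = B.edgeSet.ncard := by
  rw [← Nat.card_coe_set_eq, ← Nat.card_coe_set_eq]
  exact Nat.card_congr e.mapEdgeSet

lemma exists_le_of_subCount_ne_zero {H G : SimpleGraph (Fin n)}
    (h : subCount H G ≠ 0) : ∃ K, K ≤ G ∧ Nonempty (H ≃g K) := by
  have hne : Nonempty {H' : G.Subgraph // Nonempty (H ≃g H'.coe)} :=
    (Nat.card_ne_zero.mp h).1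
  obtain ⟨H', ⟨e⟩⟩ := hne
  have hsp : H'.IsSpanning := by
    rw [Subgraph.isSpanning_iff]
    refine Set.eq_of_subset_of_ncard_le (Set.subset_univ _) ?_ (Set.toFinite _)
    have h1 : H'.verts.ncard = n := by
      rw [← Nat.card_coe_set_eq, Nat.card_congr e.toEquiv.symm, Nat.card_eq_fintype_card,
        Fintype.card_fin]
    rw [h1, Set.ncard_univ, Nat.card_eq_fintype_card, Fintype.card_fin]
  exact ⟨H'.spanningCoe, H'.spanningCoe_le,
    ⟨e.trans (H'.spanningCoeEquivCoeOfSpanning hsp).symm⟩⟩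

lemma edge_lemma {H G : SimpleGraph (Fin n)} (h : subCount H G ≠ 0) :
    H.edgeSet.ncard ≤ G.edgeSet.ncard ∧
      (H.edgeSet.ncard = G.edgeSet.ncard → Nonempty (H ≃g G)) := by
  obtain ⟨K, hKG, ⟨e⟩⟩ := exists_le_of_subCount_ne_zero h
  have hKe : K.edgeSet ⊆ G.edgeSet := edgeSet_mono hKG
  have h1 : H.edgeSet.ncard = K.edgeSet.ncard := ncard_edgeSet_eq_of_iso e
  have h2 : K.edgeSet.ncard ≤ G.edgeSet.ncard :=
    Set.ncard_le_ncard hKe (Set.toFinite _)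
  refine ⟨h1 ▸ h2, fun heq => ?_⟩
  have : K.edgeSet = G.edgeSet :=
    Set.eq_of_subset_of_ncard_le hKe (by omega) (Set.toFinite _)
  have : K = G := edgeSet_injective this
  exact ⟨this ▸ e⟩

end Aux

/-- Let `n ≥ 3` and let `C` be a class of `n`-vertex graphs closed under
isomorphism, recognisable, and satisfying Kocay's lemma for a finite family
`𝔉 = (L_1, …, L_l)` of sequences of graphs with fewer than `n` vertices. Let `M`
be the matrix of covering numbers `c(L_i, H)`, with rows indexed by `Fin l` and
columns indexed by the isomorphism classes of graphs in `C` (a transversal `R`).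
Then `|C/∼| ≥ rank_ℝ(M)`, where `|C/∼| = D.card` for any transversal `D` of the
reconstruction classes of `C`. -/
theorem stmt_6 {n l : ℕ} (hn : 3 ≤ n) (C : Set (SimpleGraph (Fin n)))
    (hiso : ∀ G ∈ C, ∀ H, Nonempty (G ≃g H) → H ∈ C)
    (hrecog : ∀ G ∈ C, ∀ H, IsReconstruction G H → H ∈ C)
    (𝔉 : Fin l → GSeq) (h𝔉 : ∀ i : Fin l, ∀ F ∈ 𝔉 i, F.1 < n)
    (R : Finset (SimpleGraph (Fin n))) (hR : IsIsoTransversal C R)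
    (hKocay : ∀ i : Fin l, ∀ G ∈ C, ∀ G' ∈ C, IsReconstruction G G' →
      ∑ H ∈ R, coverCount (𝔉 i) H * subCount H G' =
        ∑ H ∈ R, coverCount (𝔉 i) H * subCount H G)
    (D : Finset (SimpleGraph (Fin n))) (hD : IsReconTransversal C D) :
    (Matrix.of fun (i : Fin l) (H : ↥R) =>
        ((coverCount (𝔉 i) (H : SimpleGraph (Fin n)) : ℝ))).rank ≤ D.card := by
  classical
  set M : Matrix (Fin l) ↥R ℝ :=
    Matrix.of fun (i : Fin l) (H : ↥R) =>
      ((coverCount (𝔉 i) (H : SimpleGraph (Fin n)) : ℝ)) with hM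
  -- the subgraph-count matrix
  set S : Matrix ↥R ↥R ℝ :=
    Matrix.of fun (H G : ↥R) =>
      ((subCount (H : SimpleGraph (Fin n)) (G : SimpleGraph (Fin n)) : ℝ)) with hS
  -- enumerate R sorted by number of edges
  set m := R.card with hm
  have e0 : Fin m ≃ ↥R := (Fintype.equivFinOfCardEq (Fintype.card_coe R)).symm
  set key : ↥R → ℕ := fun H => (H : SimpleGraph (Fin n)).edgeSet.ncard with hkey
  set σ : Equiv.Perm (Fin m) := Tuple.sort (key ∘ e0) with hσ
  set π : Fin m ≃ ↥R := σ.trans e0 with hπ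
  have hmono : Monotone (key ∘ π) := by
    have := Tuple.monotone_sort (key ∘ e0)
    intro a b hab
    exact this hab
  -- graphs in R that are isomorphic are equal
  have hRuniq : ∀ H G : ↥R, Nonempty ((H : SimpleGraph (Fin n)) ≃g (G : SimpleGraph (Fin n))) → H = G := by
    rintro ⟨H, hHR⟩ ⟨G, hGR⟩ ⟨e⟩
    have hHC : H ∈ C := hR.1 hHR
    obtain ⟨W, -, hWuniq⟩ := hR.2 H hHC
    have h1 : H = W := hWuniq H ⟨hHR, ⟨Iso.refl⟩⟩
    have h2 : G = W := hWuniq G ⟨hGR, ⟨e⟩⟩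
    simp [h1, h2]
  -- S, reindexed by π, is upper triangular with positive diagonal
  have htri : (S.submatrix π π).BlockTriangular id := by
    intro i j hij
    simp only [Matrix.submatrix_apply, hS, Matrix.of_apply, id_eq] at hij ⊢
    rw [Nat.cast_eq_zero]
    by_contra hsc
    have h1 := edge_lemma hsc
    have h2 : key (π j) ≤ key (π i) := hmono (le_of_lt hij)
    have h3 : key (π i) = key (π j) := le_antisymm h1.1 h2
    have h4 : π i = π j := hRuniq _ _ (h1.2 h3)
    exact absurd (π.injective h4) (by omega)
  have hdet' : (S.submatrix π π).det ≠ 0 := by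
    rw [Matrix.det_of_upperTriangular htri]
    refine Finset.prod_ne_zero_iff.mpr fun i _ => ?_
    simp only [Matrix.submatrix_apply, hS, Matrix.of_apply]
    exact_mod_cast (subCount_self_pos _).ne'
  have hdet : IsUnit S.det := by
    rw [← Matrix.det_submatrix_equiv_self π S]
    exact isUnit_iff_ne_zero.mpr hdet'
  -- the representative map into D
  have hmem : ∀ G : ↥R, (G : SimpleGraph (Fin n)) ∈ C := fun G => hR.1 G.2
  have hchoice : ∀ G : ↥R, ∃ H, (H ∈ D ∧ IsReconstruction (G : SimpleGraph (Fin n)) H) :=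
    fun G => (hD.2 G (hmem G)).exists
  set φ : ↥R → ↥D := fun G => ⟨(hchoice G).choose, (hchoice G).choose_spec.1⟩ with hφ
  have hφrec : ∀ G : ↥R, IsReconstruction (G : SimpleGraph (Fin n)) (φ G : SimpleGraph (Fin n)) :=
    fun G => (hchoice G).choose_spec.2
  set N : Matrix (Fin l) ↥D ℝ :=
    Matrix.of fun (i : Fin l) (d : ↥D) =>
      ((∑ H ∈ R, coverCount (𝔉 i) H * subCount H (d : SimpleGraph (Fin n)) : ℕ) : ℝ) with hN
  set P : Matrix ↥D ↥R ℝ :=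
    Matrix.of fun (d : ↥D) (G : ↥R) => if φ G = d then (1 : ℝ) else 0 with hP
  have hMS : M * S = N * P := by
    ext i G
    rw [Matrix.mul_apply, Matrix.mul_apply]
    have hrhs : ∑ d : ↥D, N i d * P d G = N i (φ G) := by
      simp [hP, mul_ite, mul_one, mul_zero]
    rw [hrhs]
    have hlhs : ∑ H : ↥R, M i H * S H G
        = ((∑ H ∈ R, coverCount (𝔉 i) H * subCount H (G : SimpleGraph (Fin n)) : ℕ) : ℝ) := by
      push_cast
      rw [← Finset.sum_coe_sort R
        (fun H => (coverCount (𝔉 i) H : ℝ) * (subCount H (G : SimpleGraph (Fin n)) : ℝ))]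
      rfl
    rw [hlhs, hN]
    simp only [Matrix.of_apply]
    rw [hKocay i G (hmem G) (φ G) (hD.1 (φ G).2) (hφrec G)]
  have hrankM : M.rank = (M * S).rank :=
    (Matrix.rank_mul_eq_left_of_isUnit_det S M hdet).symm
  calc M.rank = (N * P).rank := by rw [hrankM, hMS]
    _ ≤ N.rank := Matrix.rank_mul_le_left N P
    _ ≤ Fintype.card ↥D := Matrix.rank_le_card_width N
    _ = D.card := Fintype.card_coe D
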